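/- For α ∈ K not in q^ℤ, the basic hypergeometric series Φ(x) = Σ_{n≥0} (1-q)^n x^n / ((1-qα)(1-q²α)···(1-q^n α)) factors as Φ(x) = ((1-α)/(1-q)) · e_q(x) · g_α(x), where e_q(x) = Σ_{n≥0} x^n/[n]_q^! and g_α(x) = Σ_{n≥0} q^{n(n+1)/2} (-x)^n/[n]_q^! · (1-q)/(1-q^n α), as an identity of formal power series. -/

import Mathlib

/-- The q-integer `[n]_q = 1 + q + ... + q^{n-1}`. -/
def qInt {K : Type*} [Field K] (q : K) (n : ℕ) : K := ∑ i ∈ Finset.range n, q ^ i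

/-- The q-factorial `[n]_q^! = [1]_q ⋯ [n]_q`. -/
def qFact {K : Type*} [Field K] (q : K) : ℕ → K
  | 0 => 1
  | n + 1 => qFact q n * qInt q (n + 1)

section Aux

variable {K : Type*} [Field K]

lemma one_sub_mul_qInt (q : K) (m : ℕ) : (1 - q) * qInt q m = 1 - q ^ m := by
  have h := geom_sum_mul q m
  unfold qInt
  linear_combination -h

lemma qInt_ne_zero {q : K} (hroot : ∀ n : ℕ, 0 < n → q ^ n ≠ 1) {m : ℕ} (hm : 0 < m) :
    qInt q m ≠ 0 := by
  intro h
  have h2 := one_sub_mul_qInt q m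
  rw [h, mul_zero] at h2
  exact hroot m hm (by linear_combination h2)

lemma qFact_ne_zero {q : K} (hroot : ∀ n : ℕ, 0 < n → q ^ n ≠ 1) :
    ∀ n, qFact q n ≠ 0 := by
  intro n
  induction n with
  | zero => simp [qFact]
  | succ n ih =>
    show qFact q n * qInt q (n + 1) ≠ 0
    exact mul_ne_zero ih (qInt_ne_zero hroot n.succ_pos)

lemma qInt_add (q : K) (a b : ℕ) : qInt q (a + b) = qInt q a + q ^ a * qInt q b := by
  unfold qInt
  rw [Finset.sum_range_add, Finset.mul_sum]
  congr 1
  refine Finset.sum_congr rfl fun i _ => ?_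
  rw [pow_add]

lemma one_sub_q_ne_zero {q : K} (hroot : ∀ n : ℕ, 0 < n → q ^ n ≠ 1) : (1 : K) - q ≠ 0 := by
  intro h
  exact hroot 1 one_pos (by rw [pow_one]; linear_combination -h)

lemma den_ne_zero {q α : K} (hα : ∀ m : ℤ, α ≠ q ^ m) (k : ℕ) : (1 : K) - q ^ k * α ≠ 0 := by
  intro h
  have hk : q ^ k * α = 1 := by linear_combination -h
  have hqk : q ^ k ≠ 0 := by
    intro h0; rw [h0, zero_mul] at hk; exact zero_ne_one hk
  rcases Nat.eq_zero_or_pos k with rfl | hkpos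
  · exact hα 0 (by simpa using hk)
  · have hq0 : q ≠ 0 := fun h0 => hqk (by rw [h0, zero_pow hkpos.ne'])
    have hα' : α = (q ^ k)⁻¹ := by
      field_simp
      linear_combination hk
    refine hα (-(k : ℤ)) ?_
    rw [hα', zpow_neg, zpow_natCast]

/-- The auxiliary alternating sum. -/
noncomputable def Fq (q : K) (n : ℕ) : K :=
  ∑ k ∈ Finset.range (n + 1), (-1 : K) ^ k * q ^ (k * (k - 1) / 2) / (qFact q k * qFact q (n - k))

lemma Fq_rec {q : K} (hroot : ∀ n : ℕ, 0 < n → q ^ n ≠ 1) (n : ℕ) :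
    qInt q (n + 1) * Fq q (n + 1) = (1 - q ^ n) * Fq q n := by
  have hfac := qFact_ne_zero hroot (K := K)
  have hint : ∀ m : ℕ, 0 < m → qInt q m ≠ 0 := fun m hm => qInt_ne_zero hroot hm
  unfold Fq
  rw [Finset.mul_sum]
  have key : ∀ k ∈ Finset.range (n + 2),
      qInt q (n + 1) * ((-1 : K) ^ k * q ^ (k * (k - 1) / 2) / (qFact q k * qFact q (n + 1 - k)))
        = (if k ≤ n then (-1 : K) ^ k * q ^ (k * (k - 1) / 2) / (qFact q k * qFact q (n - k))
            else 0)
          + (if 1 ≤ k then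
              -((-1 : K) ^ (k - 1) * q ^ ((k - 1) * (k - 1 - 1) / 2) * q ^ n /
                (qFact q (k - 1) * qFact q (n + 1 - k)))
            else 0) := by
    intro k hk
    rw [Finset.mem_range] at hk
    rcases k with _ | j
    · rw [if_pos (Nat.zero_le n), if_neg (by omega)]
      have h1 : qFact q (n + 1) = qFact q n * qInt q (n + 1) := rfl
      simp only [pow_zero, Nat.zero_sub, Nat.sub_zero, one_mul, add_zero, h1,
        show qFact q 0 = 1 from rfl]
      have e1 := hfac n
      have e3 := hint (n + 1) n.succ_pos
      field_simp
    · have hj : j ≤ n := by omega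
      by_cases hjn : j < n
      · -- j + 1 ≤ n
        obtain ⟨m, rfl⟩ : ∃ m, n = m + (j + 1) := ⟨n - (j + 1), by omega⟩
        rw [if_pos (by omega), if_pos (by omega)]
        simp only [Nat.add_sub_cancel, show m + (j + 1) - j = m + 1 by omega,
          show m + (j + 1) + 1 - (j + 1) = m + 1 by omega,
          show (j + 1) * (j + 1 - 1) / 2 = j * (j - 1) / 2 + j from Nat.triangle_succ j,
          show (j + 1) * j / 2 = j * (j - 1) / 2 + j from by
            simpa using Nat.triangle_succ j]
        have h1 : qFact q (j + 1) = qFact q j * qInt q (j + 1) := rfl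
        have h2 : qFact q (m + 1) = qFact q m * qInt q (m + 1) := rfl
        have h3 : qInt q (m + (j + 1) + 1) = qInt q (m + 1) + q ^ (m + 1) * qInt q (j + 1) := by
          rw [show m + (j + 1) + 1 = (m + 1) + (j + 1) by ring, qInt_add]
        have h4 : q ^ (m + (j + 1)) = q ^ (m + 1) * q ^ j := by
          rw [← pow_add]; ring_nf
        rw [h1, h2, h3, h4, pow_add]
        have e1 := hfac j
        have e2 := hfac m
        have e3 := hint (j + 1) j.succ_pos
        have e4 := hint (m + 1) m.succ_pos
        field_simp
        ring
      · -- j = n, k = n + 1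
        have hje : j = n := by omega
        subst hje
        rw [if_neg (by omega), if_pos (by omega)]
        simp only [Nat.add_sub_cancel, Nat.sub_self,
          show (j + 1) * (j + 1 - 1) / 2 = j * (j - 1) / 2 + j from Nat.triangle_succ j,
          show (j + 1) * j / 2 = j * (j - 1) / 2 + j from by
            simpa using Nat.triangle_succ j]
        have h1 : qFact q (j + 1) = qFact q j * qInt q (j + 1) := rfl
        have h0 : qFact q 0 = 1 := rfl
        rw [h1, h0, pow_add]
        have e1 := hfac j
        have e3 := hint (j + 1) j.succ_pos
        field_simp
        ring
  rw [Finset.sum_congr rfl key, Finset.sum_add_distrib]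
  have hA : (∑ k ∈ Finset.range (n + 2),
      if k ≤ n then (-1 : K) ^ k * q ^ (k * (k - 1) / 2) / (qFact q k * qFact q (n - k)) else 0)
      = ∑ k ∈ Finset.range (n + 1),
          (-1 : K) ^ k * q ^ (k * (k - 1) / 2) / (qFact q k * qFact q (n - k)) := by
    rw [Finset.sum_range_succ, if_neg (by omega), add_zero]
    exact Finset.sum_congr rfl fun k hk => if_pos (by
      rw [Finset.mem_range] at hk; omega)
  have hB : (∑ k ∈ Finset.range (n + 2),
      if 1 ≤ k then
        -((-1 : K) ^ (k - 1) * q ^ ((k - 1) * (k - 1 - 1) / 2) * q ^ n /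
          (qFact q (k - 1) * qFact q (n + 1 - k)))
      else 0)
      = -(q ^ n * ∑ k ∈ Finset.range (n + 1),
          (-1 : K) ^ k * q ^ (k * (k - 1) / 2) / (qFact q k * qFact q (n - k))) := by
    rw [Finset.sum_range_succ']
    simp only [if_neg (by omega : ¬ (1 : ℕ) ≤ 0), add_zero, Nat.add_sub_cancel,
      if_pos (Nat.le_add_left 1 _)]
    rw [Finset.mul_sum, ← Finset.sum_neg_distrib]
    refine Finset.sum_congr rfl fun k hk => ?_
    have : n + 1 - (k + 1) = n - k := by omega
    rw [this]
    ring
  rw [hA, hB]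
  ring

lemma Fq_eq_zero {q : K} (hroot : ∀ n : ℕ, 0 < n → q ^ n ≠ 1) {n : ℕ} (hn : 1 ≤ n) :
    Fq q n = 0 := by
  induction n with
  | zero => omega
  | succ n ih =>
    have h := Fq_rec hroot n
    rcases Nat.eq_zero_or_pos n with rfl | hn'
    · simp only [pow_zero, sub_self, zero_mul] at h
      have := qInt_ne_zero hroot (m := 1) one_pos
      exact (mul_eq_zero.mp h).resolve_left this
    · rw [ih hn', mul_zero] at h
      have := qInt_ne_zero hroot (m := n + 1) n.succ_pos
      exact (mul_eq_zero.mp h).resolve_left this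

/-- The coefficients of `g_α`. -/
noncomputable def gg (q α : K) (k : ℕ) : K :=
  q ^ (k * (k + 1) / 2) * (-1 : K) ^ k / qFact q k * ((1 - q) / (1 - q ^ k * α))

/-- The coefficients of the product `e_q · g_α`. -/
noncomputable def BB (q α : K) (n : ℕ) : K :=
  ∑ k ∈ Finset.range (n + 1), gg q α k * (1 / qFact q (n - k))

lemma tri (k : ℕ) : k * (k + 1) / 2 = k * (k - 1) / 2 + k := by
  rw [mul_comm k (k + 1)]
  exact Nat.triangle_succ k

lemma BB_rec {q α : K} (hroot : ∀ n : ℕ, 0 < n → q ^ n ≠ 1)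
    (hα : ∀ m : ℤ, α ≠ q ^ m) (n : ℕ) :
    (1 - q ^ (n + 1) * α) * BB q α (n + 1) = (1 - q) * BB q α n := by
  have hfac := qFact_ne_zero hroot (K := K)
  have hint : ∀ m : ℕ, 0 < m → qInt q m ≠ 0 := fun m hm => qInt_ne_zero hroot hm
  have hden := den_ne_zero hα
  unfold BB
  rw [Finset.mul_sum]
  have key : ∀ k ∈ Finset.range (n + 2),
      (1 - q ^ (n + 1) * α) * (gg q α k * (1 / qFact q (n + 1 - k)))
        = (if k ≤ n then (1 - q) * (gg q α k * (1 / qFact q (n - k))) else 0)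
          + (1 - q) * q ^ (n + 1) *
              ((-1 : K) ^ k * q ^ (k * (k - 1) / 2) / (qFact q k * qFact q (n + 1 - k))) := by
    intro k hk
    rw [Finset.mem_range] at hk
    have hk' : k ≤ n + 1 := by omega
    have hsplit : (1 : K) - q ^ (n + 1) * α
        = (1 - q ^ (n + 1 - k)) + q ^ (n + 1 - k) * (1 - q ^ k * α) := by
      have : q ^ (n + 1) = q ^ (n + 1 - k) * q ^ k := by
        rw [← pow_add]
        congr 1
        omega
      rw [this]; ring
    rw [hsplit, add_mul]
    congr 1
    · -- first piece
      rcases lt_or_eq_of_le hk' with hlt | rfl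
      · rw [if_pos (by omega)]
        obtain ⟨m, rfl⟩ : ∃ m, n = m + k := ⟨n - k, by omega⟩
        simp only [Nat.add_sub_cancel, show m + k + 1 - k = m + 1 by omega]
        have h2 : qFact q (m + 1) = qFact q m * qInt q (m + 1) := rfl
        have h5 : (1 : K) - q ^ (m + 1) = (1 - q) * qInt q (m + 1) :=
          (one_sub_mul_qInt q (m + 1)).symm
        rw [h2, h5]
        have e2 := hfac m
        have e4 := hint (m + 1) m.succ_pos
        field_simp
      · rw [if_neg (by omega)]
        simp only [Nat.sub_self, pow_zero, sub_self, zero_mul]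
    · -- second piece
      unfold gg
      have hgk : q ^ (k * (k + 1) / 2) = q ^ (k * (k - 1) / 2) * q ^ k := by
        rw [tri, pow_add]
      rw [hgk]
      have e1 := hfac k
      have e2 := hfac (n + 1 - k)
      have e3 := hden k
      have hq : q ^ (n + 1) = q ^ (n + 1 - k) * q ^ k := by
        rw [← pow_add]; congr 1; omega
      rw [hq]
      field_simp
  rw [Finset.sum_congr rfl key, Finset.sum_add_distrib]
  have hA : (∑ k ∈ Finset.range (n + 2),
      if k ≤ n then (1 - q) * (gg q α k * (1 / qFact q (n - k))) else 0)
      = (1 - q) * ∑ k ∈ Finset.range (n + 1), gg q α k * (1 / qFact q (n - k)) := by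
    rw [Finset.sum_range_succ, if_neg (by omega), add_zero, Finset.mul_sum]
    exact Finset.sum_congr rfl fun k hk => if_pos (by rw [Finset.mem_range] at hk; omega)
  have hB : (∑ k ∈ Finset.range (n + 2),
      (1 - q) * q ^ (n + 1) *
        ((-1 : K) ^ k * q ^ (k * (k - 1) / 2) / (qFact q k * qFact q (n + 1 - k))))
      = (1 - q) * q ^ (n + 1) * Fq q (n + 1) := by
    rw [Fq, Finset.mul_sum]
  rw [hA, hB, Fq_eq_zero hroot (by omega), mul_zero, add_zero]

lemma main_coeff {q α : K} (hroot : ∀ n : ℕ, 0 < n → q ^ n ≠ 1)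
    (hα : ∀ m : ℤ, α ≠ q ^ m) (n : ℕ) :
    (1 - q) ^ n / ∏ i ∈ Finset.range n, (1 - q ^ (i + 1) * α)
      = (1 - α) / (1 - q) * BB q α n := by
  have hden := den_ne_zero hα
  have hq := one_sub_q_ne_zero hroot
  induction n with
  | zero =>
    simp only [pow_zero, Finset.range_zero, Finset.prod_empty, div_one]
    unfold BB
    rw [Finset.sum_range_one]
    unfold gg
    have h0 : qFact q 0 = 1 := rfl
    simp only [Nat.sub_zero, h0, pow_zero, one_mul, mul_one]
    have hd0 := hden 0
    rw [pow_zero, one_mul] at hd0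
    field_simp
    simp
  | succ n ih =>
    have hprod : (∏ i ∈ Finset.range n, (1 - q ^ (i + 1) * α)) ≠ 0 :=
      Finset.prod_ne_zero_iff.mpr fun i _ => hden (i + 1)
    have hd : (1 : K) - q ^ (n + 1) * α ≠ 0 := hden (n + 1)
    have hBrec := BB_rec hroot hα n
    rw [Finset.prod_range_succ]
    rw [div_eq_iff (mul_ne_zero hprod hd)]
    rw [div_eq_iff hprod] at ih
    linear_combination (-((1 - α) / (1 - q) * ∏ i ∈ Finset.range n, (1 - q ^ (i + 1) * α))) * hBrec
      + (1 - q) * ih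

end Aux

/-- Factorization of the basic hypergeometric series `₁Φ₁(q;αq;q;(1-q)x)`:
`Φ(x) = ((1-α)/(1-q)) e_q(x) g_α(x)` as formal power series. -/
theorem hypergeometric_factorization {K : Type*} [Field K] [CharZero K]
    (q : K) (hroot : ∀ n : ℕ, 0 < n → q ^ n ≠ 1)
    (α : K) (hα : ∀ m : ℤ, α ≠ q ^ m) :
    (PowerSeries.mk fun n : ℕ =>
        (1 - q) ^ n / ∏ i ∈ Finset.range n, (1 - q ^ (i + 1) * α))
      = PowerSeries.C ((1 - α) / (1 - q)) *
        (PowerSeries.mk fun n : ℕ => 1 / qFact q n) *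
        (PowerSeries.mk fun n : ℕ =>
          q ^ (n * (n + 1) / 2) * (-1 : K) ^ n / qFact q n *
            ((1 - q) / (1 - q ^ n * α))) := by
  ext n
  rw [mul_assoc, PowerSeries.coeff_C_mul, PowerSeries.coeff_mk,
    mul_comm (PowerSeries.mk fun n : ℕ => 1 / qFact q n), PowerSeries.coeff_mul]
  simp only [PowerSeries.coeff_mk]
  rw [Finset.Nat.sum_antidiagonal_eq_sum_range_succ_mk]
  exact main_coeff hroot hα n
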